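/- In the Efficiency-Bayesian Mask Game, if a·(1-b)·ρ·(1-ρ) < C_use/C_i < a·ρ·(1-ρ), then (no, use) and (use, no) are pure-strategy Nash equilibria, while neither (no,no) nor (use,use) is. -/
import Mathlib


inductive BStrat | no | use
deriving DecidableEq

noncomputable def ecost (a b ρ Cuse Ci : ℝ) : BStrat → BStrat → ℝ
  | .no, .no => ρ * (1 - ρ) * Ci
  | .no, .use => (1 - b) * (ρ * (1 - ρ) * Ci)
  | .use, .no => (1 - a) * (ρ * (1 - ρ) * Ci) + Cuse
  | .use, .use => Cuse + (1 - a) * (1 - b) * (ρ * (1 - ρ) * Ci)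

def effNE (a b ρ Cuse Ci : ℝ) (s1 s2 : BStrat) : Prop :=
  (∀ t : BStrat, ecost a b ρ Cuse Ci s1 s2 ≤ ecost a b ρ Cuse Ci t s2) ∧
  (∀ t : BStrat, ecost a b ρ Cuse Ci s2 s1 ≤ ecost a b ρ Cuse Ci t s1)

/-- In the intermediate regime, (no, use) and (use, no) are the pure NEs,
while neither (no, no) nor (use, use) is a NE. -/
theorem eff_bayesian_mixed_profiles_NE (a b ρ Cuse Ci : ℝ)
    (ha : a ∈ Set.Ioc (0:ℝ) 1) (hb : b ∈ Set.Ico (0:ℝ) 1)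
    (hρ : ρ ∈ Set.Ioo (0:ℝ) 1) (hCuse : 0 < Cuse) (hCi : 0 < Ci)
    (hlo : a * (1 - b) * (ρ * (1 - ρ)) < Cuse / Ci)
    (hhi : Cuse / Ci < a * (ρ * (1 - ρ))) :
    effNE a b ρ Cuse Ci .no .use ∧ effNE a b ρ Cuse Ci .use .no ∧
    ¬ effNE a b ρ Cuse Ci .no .no ∧ ¬ effNE a b ρ Cuse Ci .use .use := by

  obtain ⟨hρ0, hρ1⟩ := hρ
  have hlo' : a * (1 - b) * (ρ * (1 - ρ)) * Ci < Cuse := by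
    rw [lt_div_iff₀ hCi] at hlo; linarith
  have hhi' : Cuse < a * (ρ * (1 - ρ)) * Ci := by
    rw [div_lt_iff₀ hCi] at hhi; linarith
  refine ⟨⟨fun t => ?_, fun t => ?_⟩, ⟨fun t => ?_, fun t => ?_⟩, fun h => ?_, fun h => ?_⟩
  · cases t <;> simp [ecost] <;> nlinarith
  · cases t <;> simp [ecost] <;> nlinarith
  · cases t <;> simp [ecost] <;> nlinarith
  · cases t <;> simp [ecost] <;> nlinarith
  · have := h.1 .use; simp [ecost] at this; nlinarith
  · have := h.1 .no; simp [ecost] at this; nlinarith
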